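/- Let p₁, p₂, p₃ ∈ 𝐇 be linearly independent, and for each unordered pair {i,j} let c_ij = c_ji ∈ 𝐇 ∩ span(p_i, p_j) be an edge center; write cosh d_ij := −p_i ∗ c_ij and cosh d_ji := −p_j ∗ c_ij. Then there exists a nonzero vector c ∈ ℝ³ satisfying c ∗ ((c₁₂ ∗ p₁)p₂ − (c₁₂ ∗ p₂)p₁) = 0, c ∗ ((c₂₃ ∗ p₂)p₃ − (c₂₃ ∗ p₃)p₂) = 0, and c ∗ ((c₃₁ ∗ p₃)p₁ − (c₃₁ ∗ p₁)p₃) = 0 (i.e., the three perpendiculars to the edges through the edge centers meet, in the extended sense, at a single point) if and only if (p₁ ∗ c₁₂)(p₂ ∗ c₂₃)(p₃ ∗ c₃₁) = (p₁ ∗ c₃₁)(p₂ ∗ c₁₂)(p₃ ∗ c₂₃), equivalently if and only if cosh d₁₂ cosh d₂₃ cosh d₃₁ = cosh d₂₁ cosh d₃₂ cosh d₁₃. -/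
import Mathlib


noncomputable section

/-- The Lorentzian inner product `u ∗ v = u₁v₁ + u₂v₂ − u₃v₃` on ℝ³. -/
def lor (u v : Fin 3 → ℝ) : ℝ := u 0 * v 0 + u 1 * v 1 - u 2 * v 2

/-- The hyperboloid model of the hyperbolic plane. -/
def Hyp : Set (Fin 3 → ℝ) := {u | lor u u = -1 ∧ 0 < u 2}

/-- The Lorentzian cross product `u ⊗ v = J (u × v)`, `J = diag(1,1,−1)`. -/
def lcross (u v : Fin 3 → ℝ) : Fin 3 → ℝ :=
  ![u 1 * v 2 - u 2 * v 1, u 2 * v 0 - u 0 * v 2, -(u 0 * v 1 - u 1 * v 0)]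

/-- Lorentzian magnitude `‖w‖ = √(w ∗ w)` (for `w` with `w ∗ w ≥ 0`). -/
def lnorm (w : Fin 3 → ℝ) : ℝ := Real.sqrt (lor w w)

/-- The unit tangent vector at `p` toward `y`:
`t_p(y) = (y + (p ∗ y)p)/√(y ∗ y + (p ∗ y)²)`. -/
def tang (p y : Fin 3 → ℝ) : Fin 3 → ℝ :=
  (Real.sqrt (lor y y + lor p y ^ 2))⁻¹ • (y + lor p y • p)

/-- Inverse hyperbolic cosine. -/
def arcosh (x : ℝ) : ℝ := Real.log (x + Real.sqrt (x ^ 2 - 1))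

/-- Hyperbolic distance between points of the hyperboloid: `d(p,q) = arccosh(−p ∗ q)`. -/
def dHyp (p q : Fin 3 → ℝ) : ℝ := arcosh (-lor p q)

lemma lor_comm' (u v : Fin 3 → ℝ) : lor u v = lor v u := by simp only [lor]; ring

lemma lor_expand (w u v : Fin 3 → ℝ) (a b : ℝ) :
    lor w (a • u - b • v) = a * lor w u - b * lor w v := by
  simp only [lor, Pi.sub_apply, Pi.smul_apply, smul_eq_mul]; ring

lemma cc_eq_zero (p : Fin 3 → Fin 3 → ℝ) (hp : LinearIndependent ℝ p)
    (cc : Fin 3 → ℝ) (h : ∀ i, lor cc (p i) = 0) : cc = 0 := by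
  have hu : IsUnit (Matrix.of p) := Matrix.linearIndependent_rows_iff_isUnit.mp hp
  have hinj : Function.Injective (Matrix.of p).mulVec :=
    Matrix.mulVec_injective_iff_isUnit.mpr hu
  have hw : (Matrix.of p).mulVec ![cc 0, cc 1, -(cc 2)] = (Matrix.of p).mulVec 0 := by
    funext i
    simp [Matrix.mulVec, dotProduct, Fin.sum_univ_three]
    have h2 : p i 0 * cc 0 + p i 1 * cc 1 - p i 2 * cc 2 = 0 := by
      have := h i; simp only [lor] at this; linarith
    linarith
  have hw0 := hinj hw
  funext i
  fin_cases i
  · exact congrFun hw0 0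
  · exact congrFun hw0 1
  · have := congrFun hw0 2; simpa using this

lemma exists_sol (a b g d e z : ℝ) (h : a * g * e = b * d * z) :
    ∃ x y zz : ℝ, ¬(x = 0 ∧ y = 0 ∧ zz = 0) ∧
      a * y = b * x ∧ g * zz = d * y ∧ e * x = z * zz := by
  by_cases h1 : a * g = 0 ∧ b * g = 0 ∧ b * d = 0
  · by_cases h2 : d * z = 0 ∧ g * e = 0 ∧ d * e = 0
    · by_cases h3 : z * a = 0 ∧ z * b = 0 ∧ e * a = 0
      · obtain ⟨h1a, h1b, h1c⟩ := h1
        obtain ⟨h2a, h2b, h2c⟩ := h2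
        obtain ⟨h3a, h3b, h3c⟩ := h3
        by_cases hb : b = 0
        · by_cases he : e = 0
          · exact ⟨1, 0, 0, by simp, by simp [hb], by simp, by simp [he]⟩
          · have hg : g = 0 := by
              rcases mul_eq_zero.mp h2b with h | h; exact h; exact absurd h he
            have hd : d = 0 := by
              rcases mul_eq_zero.mp h2c with h | h; exact h; exact absurd h he
            have ha : a = 0 := by
              rcases mul_eq_zero.mp h3c with h | h; exact absurd h he; exact h
            exact ⟨0, 1, 0, by simp, by simp [ha, hb], by simp [hd], by simp⟩
        · have hg : g = 0 := by
            rcases mul_eq_zero.mp h1b with h | h; exact absurd h hb; exact h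
          have hd : d = 0 := by
            rcases mul_eq_zero.mp h1c with h | h; exact absurd h hb; exact h
          have hz : z = 0 := by
            rcases mul_eq_zero.mp h3b with h | h; exact h; exact absurd h hb
          exact ⟨0, 0, 1, by simp, by simp, by simp [hg], by simp [hz]⟩
      · refine ⟨z * a, z * b, e * a, by tauto, by ring, by linarith [h], by ring⟩
    · refine ⟨d * z, g * e, d * e, by tauto, by linarith [h], by ring, by ring⟩
  · refine ⟨a * g, b * g, b * d, by tauto, by ring, by ring, by linarith [h]⟩

lemma key (p : Fin 3 → Fin 3 → ℝ) (hp : LinearIndependent ℝ p) (a b g d e z : ℝ) :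
    (∃ cc : Fin 3 → ℝ, cc ≠ 0 ∧
        lor cc (a • p 1 - b • p 0) = 0 ∧
        lor cc (g • p 2 - d • p 1) = 0 ∧
        lor cc (e • p 0 - z • p 2) = 0) ↔ a * g * e = b * d * z := by
  have hu : IsUnit (Matrix.of p) := Matrix.linearIndependent_rows_iff_isUnit.mp hp
  have hD : (Matrix.of p).det ≠ 0 :=
    ((Matrix.isUnit_iff_isUnit_det _).mp hu).ne_zero
  set D : ℝ := (Matrix.of p).det with hDdef
  have hDval : D = p 0 0 * p 1 1 * p 2 2 - p 0 0 * p 1 2 * p 2 1 - p 0 1 * p 1 0 * p 2 2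
        + p 0 1 * p 1 2 * p 2 0 + p 0 2 * p 1 0 * p 2 1 - p 0 2 * p 1 1 * p 2 0 := by
    rw [hDdef, Matrix.det_fin_three]; simp [Matrix.of_apply]
  constructor
  · rintro ⟨cc, hcc, h1, h2, h3⟩
    rw [lor_expand] at h1 h2 h3
    set x := lor cc (p 0)
    set y := lor cc (p 1)
    set zz := lor cc (p 2)
    by_contra hne
    have hfac : a * g * e - b * d * z ≠ 0 := sub_ne_zero.mpr hne
    have hx : x = 0 := by
      have : (a * g * e - b * d * z) * x = 0 := by
        linear_combination (a * g) * h3 + (a * z) * h2 + (d * z) * h1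
      exact (mul_eq_zero.mp this).resolve_left hfac
    have hy : y = 0 := by
      have : (a * g * e - b * d * z) * y = 0 := by
        linear_combination (g * e) * h1 + (b * g) * h3 + (b * z) * h2
      exact (mul_eq_zero.mp this).resolve_left hfac
    have hz : zz = 0 := by
      have : (a * g * e - b * d * z) * zz = 0 := by
        linear_combination (a * e) * h2 + (d * e) * h1 + (b * d) * h3
      exact (mul_eq_zero.mp this).resolve_left hfac
    apply hcc
    apply cc_eq_zero p hp
    intro i
    fin_cases i
    · exact hx
    · exact hy
    · exact hz
  · intro h
    obtain ⟨x, y, zz, hnz, e1, e2, e3⟩ := exists_sol a b g d e z h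
    set cc : Fin 3 → ℝ :=
      x • lcross (p 1) (p 2) + y • lcross (p 2) (p 0) + zz • lcross (p 0) (p 1) with hccdef
    have l0 : lor cc (p 0) = x * D := by
      simp only [hccdef, lor, lcross, Pi.add_apply, Pi.smul_apply, smul_eq_mul,
        Matrix.cons_val_zero, Matrix.cons_val_one, Matrix.head_cons, Matrix.cons_val_two,
        Matrix.tail_cons]
      rw [hDval]; ring
    have l1 : lor cc (p 1) = y * D := by
      simp only [hccdef, lor, lcross, Pi.add_apply, Pi.smul_apply, smul_eq_mul,
        Matrix.cons_val_zero, Matrix.cons_val_one, Matrix.head_cons, Matrix.cons_val_two,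
        Matrix.tail_cons]
      rw [hDval]; ring
    have l2 : lor cc (p 2) = zz * D := by
      simp only [hccdef, lor, lcross, Pi.add_apply, Pi.smul_apply, smul_eq_mul,
        Matrix.cons_val_zero, Matrix.cons_val_one, Matrix.head_cons, Matrix.cons_val_two,
        Matrix.tail_cons]
      rw [hDval]; ring
    refine ⟨cc, ?_, ?_, ?_, ?_⟩
    · intro hc0
      rw [hc0] at l0 l1 l2
      simp only [lor, Pi.zero_apply, mul_zero, zero_mul, add_zero, sub_zero, zero_add] at l0 l1 l2
      exact hnz ⟨by
          have := l0.symm; exact (mul_eq_zero.mp (by linarith)).resolve_right hD,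
        by have := l1.symm; exact (mul_eq_zero.mp (by linarith)).resolve_right hD,
        by have := l2.symm; exact (mul_eq_zero.mp (by linarith)).resolve_right hD⟩
    · rw [lor_expand, l1, l0]; linear_combination D * e1
    · rw [lor_expand, l2, l1]; linear_combination D * e2
    · rw [lor_expand, l0, l2]; linear_combination D * e3

/-- Proposition 4.2 (hyperbolic compatibility): the three perpendiculars to the edges of a
hyperbolic triangle through the edge centers meet (in the extended sense) at a single point
if and only if the compatibility equation holds, equivalently
`cosh d₁₂ cosh d₂₃ cosh d₃₁ = cosh d₂₁ cosh d₃₂ cosh d₁₃` where `cosh d_ij = −p_i ∗ c_ij`. -/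
theorem hyperbolic_duality_iff_compatibility
    (p : Fin 3 → (Fin 3 → ℝ)) (hp : LinearIndependent ℝ p)
    (hpH : ∀ i, p i ∈ Hyp)
    (c : Fin 3 → Fin 3 → (Fin 3 → ℝ))
    (hcsymm : ∀ i j : Fin 3, c i j = c j i)
    (hcH : ∀ i j : Fin 3, i ≠ j → c i j ∈ Hyp ∧
      c i j ∈ Submodule.span ℝ ({p i, p j} : Set (Fin 3 → ℝ))) :
    ((∃ cc : Fin 3 → ℝ, cc ≠ 0 ∧
        lor cc (lor (c 0 1) (p 0) • p 1 - lor (c 0 1) (p 1) • p 0) = 0 ∧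
        lor cc (lor (c 1 2) (p 1) • p 2 - lor (c 1 2) (p 2) • p 1) = 0 ∧
        lor cc (lor (c 2 0) (p 2) • p 0 - lor (c 2 0) (p 0) • p 2) = 0) ↔
      lor (p 0) (c 0 1) * lor (p 1) (c 1 2) * lor (p 2) (c 2 0)
        = lor (p 0) (c 2 0) * lor (p 1) (c 0 1) * lor (p 2) (c 1 2)) ∧
    ((∃ cc : Fin 3 → ℝ, cc ≠ 0 ∧
        lor cc (lor (c 0 1) (p 0) • p 1 - lor (c 0 1) (p 1) • p 0) = 0 ∧
        lor cc (lor (c 1 2) (p 1) • p 2 - lor (c 1 2) (p 2) • p 1) = 0 ∧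
        lor cc (lor (c 2 0) (p 2) • p 0 - lor (c 2 0) (p 0) • p 2) = 0) ↔
      (-lor (p 0) (c 0 1)) * (-lor (p 1) (c 1 2)) * (-lor (p 2) (c 2 0))
        = (-lor (p 1) (c 0 1)) * (-lor (p 2) (c 1 2)) * (-lor (p 0) (c 2 0))) := by
  have K := key p hp (lor (c 0 1) (p 0)) (lor (c 0 1) (p 1)) (lor (c 1 2) (p 1))
    (lor (c 1 2) (p 2)) (lor (c 2 0) (p 2)) (lor (c 2 0) (p 0))
  rw [lor_comm' (p 0) (c 0 1), lor_comm' (p 1) (c 1 2), lor_comm' (p 2) (c 2 0),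
    lor_comm' (p 0) (c 2 0), lor_comm' (p 1) (c 0 1), lor_comm' (p 2) (c 1 2)]
  refine ⟨K.trans ⟨fun h => by linarith, fun h => by linarith⟩,
    K.trans ⟨fun h => by linear_combination -h, fun h => by linear_combination -h⟩⟩
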